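/- Let R be a commutative Noetherian ring and r ∈ R. Then the element y − C(r) (the polynomial y minus the constant r) is a non-zero-divisor in the formal power series ring R⟦y⟧. -/

import Mathlib

/-- Fields' theorem: for a commutative Noetherian ring `R` and `r ∈ R`, the element
`y − r` is a non-zero-divisor in `R⟦y⟧`. -/
theorem stmt10 {R : Type*} [CommRing R] [IsNoetherianRing R] (r : R) :
    (PowerSeries.X - PowerSeries.C r) ∈ nonZeroDivisors (PowerSeries R) := by
  rw [mem_nonZeroDivisors_iff_right]
  intro f hf
  set a : ℕ → R := fun n => PowerSeries.coeff n f with ha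
  have hcoeff : ∀ n, PowerSeries.coeff n (f * (PowerSeries.X - PowerSeries.C r)) = 0 := by
    intro n; rw [hf]; simp
  have h0 : a 0 * r = 0 := by
    have := hcoeff 0
    simp only [ha, mul_sub, map_sub, PowerSeries.coeff_mul_C, sub_eq_zero,
      PowerSeries.coeff_zero_eq_constantCoeff, PowerSeries.coeff_zero_X,
      PowerSeries.coeff_zero_mul_X] at this
    simp only [ha, PowerSeries.coeff_zero_eq_constantCoeff]
    exact this.symm
  have hstep : ∀ n, a n = a (n + 1) * r := by
    intro n
    have := hcoeff (n + 1)
    rw [mul_sub, map_sub, PowerSeries.coeff_succ_mul_X, PowerSeries.coeff_mul_C,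
      sub_eq_zero] at this
    exact this
  have hshift : ∀ n k, a n = a (n + k) * r ^ k := by
    intro n k
    induction k with
    | zero => simp
    | succ k ih =>
      rw [ih, hstep (n + k), pow_succ, ← mul_assoc]
      ring_nf
  have hann : ∀ n, r ^ (n + 1) * a n = 0 := by
    intro n
    have : a 0 = a n * r ^ n := by simpa using hshift 0 n
    have h2 : a n * r ^ n * r = 0 := by rw [← this]; exact h0
    calc r ^ (n + 1) * a n = a n * r ^ n * r := by ring
      _ = 0 := h2
  -- annihilator chain
  set J : ℕ →o Ideal R :=
    ⟨fun n => LinearMap.ker (LinearMap.mulLeft R (r ^ n)), by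
      intro m n hmn x hx
      simp only [LinearMap.mem_ker, LinearMap.mulLeft_apply] at hx ⊢
      obtain ⟨k, rfl⟩ := Nat.exists_eq_add_of_le hmn
      rw [pow_add, mul_comm (r ^ m), mul_assoc, hx, mul_zero]⟩ with hJ
  obtain ⟨N, hN⟩ := monotone_stabilizes_iff_noetherian.mpr (inferInstance : IsNoetherianRing R) J
  have key : ∀ n, a n = 0 := by
    intro n
    have h1 : a (n + N) ∈ J (n + N + 1) := by
      simp only [hJ, OrderHom.coe_mk, LinearMap.mem_ker, LinearMap.mulLeft_apply]
      exact hann (n + N)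
    have h2 : a (n + N) ∈ J N := by
      rw [hN (n + N + 1) (by omega)]; exact h1
    simp only [hJ, OrderHom.coe_mk, LinearMap.mem_ker, LinearMap.mulLeft_apply] at h2
    rw [hshift n N, mul_comm]; exact h2
  ext n
  simpa using key n
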